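/- arXiv:2410.10668 — 3 statements merged into one kernel-verified Lean document; each statement's English description precedes it below -/
import Mathlib

section
/- Let 0 < a ≤ 1 and let E ⊆ 𝕋 be an open subset of the circle that is the union of pairwise disjoint open arcs with lengths exactly l_k = a·2^{−k} for k = 1, 2, 3, …. Then for every h with 0 < h ≤ a/2, τ(h,E) ≤ 2h·log₂(a/h) + 2h; in particular τ(h,E) = O(h·log(1/h)) as h → 0+. -/
open MeasureTheory Set

/-- `τ(h,E)`: the measure of the set where the characteristic function of `E`
translated by `h` differs from itself. -/
noncomputable def tau (h : ℝ) (E : Set (AddCircle (1:ℝ))) : ℝ :=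
  (volume {x : AddCircle (1:ℝ) |
    E.indicator (fun _ => (1:ℝ)) (x + ((h : ℝ) : AddCircle (1:ℝ)))
      ≠ E.indicator (fun _ => (1:ℝ)) x}).toReal

/-- The open arc of the circle which is the image of the interval `(a, a+l)`. -/
noncomputable def arc (a l : ℝ) : Set (AddCircle (1:ℝ)) :=
  (fun r : ℝ => (r : AddCircle (1:ℝ))) '' Set.Ioo a (a + l)

/- ### Auxiliary lemmas -/

noncomputable def mk1 : ℝ → AddCircle (1:ℝ) := fun r => (r : AddCircle (1:ℝ))

lemma mk1_eq : mk1 = (QuotientAddGroup.mk : ℝ → AddCircle (1:ℝ)) := rfl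

lemma arc_eq_mk1 (a l : ℝ) : arc a l = mk1 '' Ioo a (a + l) := rfl

lemma equivIoc_mk1 (u r : ℝ) (hr : r ∈ Ioc u (u + 1)) :
    AddCircle.equivIoc 1 u (mk1 r) = ⟨r, hr⟩ := by
  rw [AddCircle.equivIoc, Equiv.apply_eq_iff_eq_symm_apply,
    QuotientAddGroup.equivIocMod_symm_apply]
  rfl

lemma image_Ioc_eq (u v : ℝ) (hv : v ≤ u + 1) :
    mk1 '' Ioc u v = {x : AddCircle (1:ℝ) | (↑(AddCircle.equivIoc 1 u x) : ℝ) ∈ Ioc u v} := by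
  ext x
  constructor
  · rintro ⟨r, hr, rfl⟩
    have hr' : r ∈ Ioc u (u + 1) := ⟨hr.1, hr.2.trans hv⟩
    show (↑(AddCircle.equivIoc 1 u (mk1 r)) : ℝ) ∈ Ioc u v
    rw [equivIoc_mk1 u r hr']
    exact hr
  · intro hx
    refine ⟨(AddCircle.equivIoc 1 u x : ℝ), hx, ?_⟩
    have h := (AddCircle.equivIoc 1 u).symm_apply_apply x
    rw [AddCircle.equivIoc] at h ⊢
    rw [QuotientAddGroup.equivIocMod_symm_apply] at h
    exact h

lemma vol_image_Ioc_le (u v : ℝ) (hv : v ≤ u + 1) :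
    volume (mk1 '' Ioc u v) ≤ ENNReal.ofReal (v - u) := by
  rcases le_or_gt v u with hvu | hvu
  · simp [Ioc_eq_empty (not_lt.mpr hvu), mk1]
  · have hmeas : MeasurableSet (mk1 '' Ioc u v) := by
      rw [image_Ioc_eq u v hv]
      exact (AddCircle.measurableEquivIoc 1 u).measurable
        (measurable_subtype_coe measurableSet_Ioc)
    have mp := AddCircle.measurePreserving_mk 1 u
    have h1 : volume (mk1 '' Ioc u v)
        = volume.restrict (Ioc u (u+1)) (QuotientAddGroup.mk ⁻¹' (mk1 '' Ioc u v)) :=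
      (mp.measure_preimage hmeas.nullMeasurableSet).symm
    rw [h1, Measure.restrict_apply' measurableSet_Ioc]
    have hsub : QuotientAddGroup.mk ⁻¹' (mk1 '' Ioc u v) ∩ Ioc u (u+1) ⊆ Ioc u v := by
      intro r hr
      obtain ⟨hr1, hr2⟩ := hr
      have h3 : mk1 r ∈ mk1 '' Ioc u v := by rw [mk1_eq]; exact hr1
      rw [image_Ioc_eq u v hv] at h3
      simp only [mem_setOf_eq] at h3
      rwa [equivIoc_mk1 u r hr2] at h3
    calc volume (QuotientAddGroup.mk ⁻¹' (mk1 '' Ioc u v) ∩ Ioc u (u+1)) ≤ volume (Ioc u v) :=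
          measure_mono hsub
      _ = ENNReal.ofReal (v - u) := Real.volume_Ioc

lemma vol_singleton (x : AddCircle (1:ℝ)) : volume ({x} : Set (AddCircle (1:ℝ))) = 0 := by
  obtain ⟨u, rfl⟩ := QuotientAddGroup.mk_surjective x
  refine le_antisymm ?_ zero_le
  have key : ∀ ε : ℝ, 0 < ε → ε ≤ 1 →
      volume ({(QuotientAddGroup.mk u : AddCircle (1:ℝ))}) ≤ ENNReal.ofReal ε := by
    intro ε hε hε1
    have hsub : ({(QuotientAddGroup.mk u : AddCircle (1:ℝ))}) ⊆ mk1 '' Ioc (u - ε) u := by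
      intro y hy
      rw [mem_singleton_iff] at hy
      subst hy
      exact ⟨u, ⟨by linarith, le_refl u⟩, rfl⟩
    calc volume ({(QuotientAddGroup.mk u : AddCircle (1:ℝ))})
        ≤ volume (mk1 '' Ioc (u - ε) u) := measure_mono hsub
      _ ≤ ENNReal.ofReal (u - (u - ε)) := vol_image_Ioc_le _ _ (by linarith)
      _ = ENNReal.ofReal ε := by norm_num
  refine ENNReal.le_of_forall_pos_le_add fun ε hε _ => ?_
  rw [zero_add]
  have hε' : (0:ℝ) < (ε:ℝ) := by exact_mod_cast hε
  refine (key (min (ε:ℝ) 1) (lt_min hε' one_pos) (min_le_right _ _)).trans ?_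
  rw [← ENNReal.ofReal_coe_nnreal]
  exact ENNReal.ofReal_le_ofReal (min_le_left _ _)

lemma vol_image_Icc_le (u v : ℝ) (hv : v ≤ u + 1) :
    volume (mk1 '' Icc u v) ≤ ENNReal.ofReal (v - u) := by
  rcases le_or_gt u v with huv | huv
  · have hsub : mk1 '' Icc u v ⊆ mk1 '' Ioc u v ∪ {mk1 u} := by
      rintro y ⟨r, hr, rfl⟩
      rcases eq_or_lt_of_le hr.1 with heq | h'
      · right; rw [mem_singleton_iff, ← heq]
      · left; exact ⟨r, ⟨h', hr.2⟩, rfl⟩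
    calc volume (mk1 '' Icc u v)
        ≤ volume (mk1 '' Ioc u v) + volume ({mk1 u} : Set (AddCircle (1:ℝ))) :=
          (measure_mono hsub).trans (measure_union_le _ _)
      _ ≤ ENNReal.ofReal (v - u) := by
          rw [vol_singleton, add_zero]; exact vol_image_Ioc_le u v hv
  · simp [Icc_eq_empty (not_le.mpr huv), mk1]

lemma mem_translate (h u v : ℝ) (x : AddCircle (1:ℝ)) :
    x + ((h : ℝ) : AddCircle (1:ℝ)) ∈ mk1 '' Ioo u v ↔ x ∈ mk1 '' Ioo (u - h) (v - h) := by
  constructor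
  · rintro ⟨s, hs, hsx⟩
    refine ⟨s - h, ⟨by linarith [hs.1], by linarith [hs.2]⟩, ?_⟩
    have h1 : mk1 (s - h) = mk1 s - mk1 h := by
      exact QuotientAddGroup.mk_sub (AddSubgroup.zmultiples (1:ℝ)) s h
    rw [h1, hsx]
    show x + mk1 h - mk1 h = x
    abel
  · rintro ⟨r, hr, rfl⟩
    refine ⟨r + h, ⟨by linarith [hr.1], by linarith [hr.2]⟩, ?_⟩
    show ((r + h : ℝ) : AddCircle (1:ℝ)) = mk1 r + _
    rw [AddCircle.coe_add]
    rfl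

lemma bad_arc_le (h l cc : ℝ) (hh : 0 < h) (hh1 : h ≤ 1/2) (hl : 0 < l) :
    volume {x : AddCircle (1:ℝ) |
      ¬((x + ((h : ℝ) : AddCircle (1:ℝ)) ∈ arc cc l) ↔ (x ∈ arc cc l))}
      ≤ ENNReal.ofReal (2 * min h l) := by
  set A : Set (AddCircle (1:ℝ)) := arc cc l with hA
  set A' : Set (AddCircle (1:ℝ)) := mk1 '' Ioo (cc - h) (cc + l - h) with hA'
  have hmemA' : ∀ x : AddCircle (1:ℝ),
      x + ((h : ℝ) : AddCircle (1:ℝ)) ∈ A ↔ x ∈ A' := by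
    intro x
    rw [hA, arc_eq_mk1, mem_translate h cc (cc + l) x, hA']
  have hsub : {x : AddCircle (1:ℝ) |
      ¬((x + ((h : ℝ) : AddCircle (1:ℝ)) ∈ arc cc l) ↔ (x ∈ arc cc l))}
      ⊆ (A' \ A) ∪ (A \ A') := by
    intro x hx
    simp only [mem_setOf_eq] at hx
    rw [hmemA' x] at hx
    by_cases h1 : x ∈ A'
    · exact Or.inl ⟨h1, fun h2 => hx ⟨fun _ => h2, fun _ => h1⟩⟩
    · exact Or.inr ⟨by tauto, h1⟩
  have hd1 : A' \ A ⊆ mk1 '' Icc (cc - h) (min cc (cc + l - h)) := by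
    refine (Set.subset_image_diff _ _ _).trans (Set.image_mono ?_)
    rintro r ⟨hr1, hr2⟩
    rw [mem_Ioo] at hr1
    refine ⟨hr1.1.le, le_min ?_ hr1.2.le⟩
    by_contra hrc
    push_neg at hrc
    exact hr2 ⟨hrc, by linarith [hr1.2]⟩
  have hd2 : A \ A' ⊆ mk1 '' Icc (max cc (cc + l - h)) (cc + l) := by
    rw [hA, arc_eq_mk1]
    refine (Set.subset_image_diff _ _ _).trans (Set.image_mono ?_)
    rintro r ⟨hr1, hr2⟩
    rw [mem_Ioo] at hr1
    refine ⟨max_le hr1.1.le ?_, hr1.2.le⟩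
    by_contra hrc
    push_neg at hrc
    exact hr2 ⟨by linarith [hr1.1], hrc⟩
  have hv1 : volume (A' \ A) ≤ ENNReal.ofReal (min h l) := by
    refine (measure_mono hd1).trans ((vol_image_Icc_le _ _ ?_).trans_eq ?_)
    · calc min cc (cc + l - h) ≤ cc := min_le_left _ _
        _ ≤ cc - h + 1 := by linarith
    · congr 1
      rcases le_total h l with hc | hc
      · rw [min_eq_left (by linarith), min_eq_left hc]; ring
      · rw [min_eq_right (by linarith), min_eq_right hc]; ring
  have hv2 : volume (A \ A') ≤ ENNReal.ofReal (min h l) := by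
    refine (measure_mono hd2).trans ((vol_image_Icc_le _ _ ?_).trans_eq ?_)
    · calc cc + l ≤ cc + l - h + 1 := by linarith
        _ ≤ max cc (cc + l - h) + 1 := by
            have := le_max_right cc (cc + l - h); linarith
    · congr 1
      rcases le_total h l with hc | hc
      · rw [max_eq_right (by linarith : cc ≤ cc + l - h), min_eq_left hc]; ring
      · rw [max_eq_left (by linarith : cc + l - h ≤ cc), min_eq_right hc]; ring
  calc volume {x : AddCircle (1:ℝ) |
      ¬((x + ((h : ℝ) : AddCircle (1:ℝ)) ∈ arc cc l) ↔ (x ∈ arc cc l))}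
      ≤ volume ((A' \ A) ∪ (A \ A')) := measure_mono hsub
    _ ≤ volume (A' \ A) + volume (A \ A') := measure_union_le _ _
    _ ≤ ENNReal.ofReal (min h l) + ENNReal.ofReal (min h l) := add_le_add hv1 hv2
    _ = ENNReal.ofReal (2 * min h l) := by
        rw [← ENNReal.ofReal_add (le_min hh.le hl.le) (le_min hh.le hl.le), two_mul]

lemma two_rpow_le {t : ℝ} (h0 : 0 ≤ t) (h1 : t ≤ 1) : (2:ℝ) ^ t ≤ 1 + t := by
  have hc := convexOn_exp.2 (Set.mem_univ (0:ℝ)) (Set.mem_univ (Real.log 2))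
    (by linarith : (0:ℝ) ≤ 1 - t) h0 (by ring)
  simp only [smul_eq_mul, mul_zero, zero_add, Real.exp_zero, mul_one,
    Real.exp_log two_pos] at hc
  rw [Real.rpow_def_of_pos two_pos]
  calc Real.exp (Real.log 2 * t) = Real.exp ((1-t) * 0 + t * Real.log 2) := by ring_nf
    _ ≤ (1 - t) * 1 + t * 2 := by simpa [Real.exp_zero, Real.exp_log two_pos] using hc
    _ = 1 + t := by ring

lemma key_ineq (a h : ℝ) (ha : 0 < a) (hh : 0 < h) (hha : h ≤ a / 2) :
    2 * h * (⌊Real.logb 2 (a/h)⌋₊ : ℝ) + 2 * a * (2:ℝ)⁻¹ ^ (⌊Real.logb 2 (a/h)⌋₊ : ℕ)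
      ≤ 2 * h * Real.logb 2 (a/h) + 2 * h := by
  set L := Real.logb 2 (a/h) with hLdef
  have hah : (2:ℝ) ≤ a / h := (le_div_iff₀ hh).mpr (by linarith)
  have hL1 : 1 ≤ L := by
    rw [hLdef, Real.le_logb_iff_rpow_le one_lt_two (by positivity), Real.rpow_one]
    exact hah
  set K := ⌊L⌋₊ with hK
  have hKL : (K:ℝ) ≤ L := Nat.floor_le (by linarith)
  have hLK : L < K + 1 := Nat.lt_floor_add_one L
  have h2L : (2:ℝ) ^ L = a / h := Real.rpow_logb two_pos (by norm_num) (by positivity)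
  have h2K : a * (2:ℝ)⁻¹ ^ (K:ℕ) = h * (2:ℝ) ^ (L - (K:ℝ)) := by
    have e1 : (2:ℝ)⁻¹ ^ (K:ℕ) = (2:ℝ) ^ (-(K:ℝ)) := by
      rw [← Real.rpow_natCast (2:ℝ)⁻¹ K, Real.inv_rpow (by norm_num : (0:ℝ) ≤ 2),
        ← Real.rpow_neg (by norm_num : (0:ℝ) ≤ 2)]
    have hpK : (0:ℝ) < (2:ℝ) ^ ((K:ℕ):ℝ) := Real.rpow_pos_of_pos two_pos _
    rw [e1, Real.rpow_sub two_pos, h2L, Real.rpow_neg (by norm_num : (0:ℝ) ≤ 2)]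
    field_simp
  have ht0 : 0 ≤ L - K := by linarith
  have ht1 : L - K ≤ 1 := by linarith
  have h2t := two_rpow_le ht0 ht1
  nlinarith [h2K, hh]

lemma bad_set_eq (E : Set (AddCircle (1:ℝ))) (h' : AddCircle (1:ℝ)) :
    {x : AddCircle (1:ℝ) | E.indicator (fun _ => (1:ℝ)) (x + h')
      ≠ E.indicator (fun _ => (1:ℝ)) x}
      = {x : AddCircle (1:ℝ) | ¬((x + h' ∈ E) ↔ (x ∈ E))} := by
  ext x
  by_cases h1 : x + h' ∈ E <;> by_cases h2 : x ∈ E <;>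
    simp [Set.indicator_apply, h1, h2]

/-- Main quantitative bound. -/
lemma main_bound (a : ℝ) (ha : 0 < a) (ha' : a ≤ 1) (c : ℕ → ℝ)
    (E : Set (AddCircle (1:ℝ)))
    (hE : E = ⋃ k : ℕ, arc (c k) (a * (2:ℝ)⁻¹ ^ (k + 1)))
    (h : ℝ) (hh : 0 < h) (hha : h ≤ a / 2) :
    tau h E ≤ 2 * h * Real.logb 2 (a / h) + 2 * h := by
  set l : ℕ → ℝ := fun k => a * (2:ℝ)⁻¹ ^ (k + 1) with hl
  set A : ℕ → Set (AddCircle (1:ℝ)) := fun k => arc (c k) (l k) with hAdef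
  have hlpos : ∀ k, 0 < l k := fun k => by positivity
  have hh2 : h ≤ 1/2 := by linarith
  set h' : AddCircle (1:ℝ) := ((h : ℝ) : AddCircle (1:ℝ)) with hh'
  -- inclusion into the union of per-arc bad sets
  have hEmem : ∀ x : AddCircle (1:ℝ), x ∈ E ↔ ∃ k, x ∈ A k := by
    intro x; rw [hE]; exact mem_iUnion
  have hsub : {x : AddCircle (1:ℝ) | ¬((x + h' ∈ E) ↔ (x ∈ E))}
      ⊆ ⋃ k, {x : AddCircle (1:ℝ) | ¬((x + h' ∈ A k) ↔ (x ∈ A k))} := by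
    intro x hx
    simp only [mem_setOf_eq] at hx
    rw [mem_iUnion]
    by_contra hc
    rw [not_exists] at hc
    have hck : ∀ k, (x + h' ∈ A k ↔ x ∈ A k) := fun k => of_not_not (hc k)
    exact hx ((hEmem (x + h')).trans ((exists_congr hck).trans (hEmem x).symm))
  -- per-arc bounds and summation
  set K := ⌊Real.logb 2 (a/h)⌋₊ with hK
  have hstep1 : volume {x : AddCircle (1:ℝ) | ¬((x + h' ∈ E) ↔ (x ∈ E))}
      ≤ ∑' k : ℕ, ENNReal.ofReal (2 * min h (l k)) := by
    refine (measure_mono hsub).trans ((measure_iUnion_le _).trans ?_)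
    exact ENNReal.tsum_le_tsum fun k => bad_arc_le h (l k) (c k) hh hh2 (hlpos k)
  have hstep2 : ∑' k : ℕ, ENNReal.ofReal (2 * min h (l k))
      ≤ ENNReal.ofReal (2 * h * K + 2 * a * (2:ℝ)⁻¹ ^ (K:ℕ)) := by
    have hsplit : ∑' k : ℕ, ENNReal.ofReal (2 * min h (l k))
        = (∑ k ∈ Finset.range K, ENNReal.ofReal (2 * min h (l k)))
          + ∑' j : ℕ, ENNReal.ofReal (2 * min h (l (j + K))) :=
      (Summable.sum_add_tsum_nat_add' ENNReal.summable).symm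
    rw [hsplit]
    have hhead : (∑ k ∈ Finset.range K, ENNReal.ofReal (2 * min h (l k)))
        ≤ ENNReal.ofReal (2 * h * K) := by
      calc (∑ k ∈ Finset.range K, ENNReal.ofReal (2 * min h (l k)))
          ≤ ∑ _k ∈ Finset.range K, ENNReal.ofReal (2 * h) :=
            Finset.sum_le_sum fun k _ => ENNReal.ofReal_le_ofReal
              (by nlinarith [min_le_left h (l k)])
        _ = K * ENNReal.ofReal (2 * h) := by
            rw [Finset.sum_const, Finset.card_range, nsmul_eq_mul]
        _ = ENNReal.ofReal (2 * h * K) := by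
            rw [← ENNReal.ofReal_natCast K,
              ← ENNReal.ofReal_mul (by positivity : (0:ℝ) ≤ (K:ℝ)), mul_comm]
    have htail : (∑' j : ℕ, ENNReal.ofReal (2 * min h (l (j + K))))
        ≤ ENNReal.ofReal (2 * a * (2:ℝ)⁻¹ ^ (K:ℕ)) := by
      have hterm : ∀ j : ℕ, ENNReal.ofReal (2 * min h (l (j + K)))
          ≤ ENNReal.ofReal (2 * l (j + K)) := fun j =>
        ENNReal.ofReal_le_ofReal (by nlinarith [min_le_right h (l (j + K))])
      refine (ENNReal.tsum_le_tsum hterm).trans ?_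
      have hsummable : Summable (fun j : ℕ => 2 * l (j + K)) := by
        have : (fun j : ℕ => 2 * l (j + K))
            = fun j : ℕ => (2 * a * (2:ℝ)⁻¹ ^ (K + 1)) * (2:ℝ)⁻¹ ^ j := by
          funext j
          simp only [hl]
          rw [pow_add, pow_add]
          ring
        rw [this]
        exact (summable_geometric_of_lt_one (by norm_num) (by norm_num)).mul_left _
      rw [← ENNReal.ofReal_tsum_of_nonneg (fun j => by positivity) hsummable]
      refine ENNReal.ofReal_le_ofReal (le_of_eq ?_)
      have : (fun j : ℕ => 2 * l (j + K))
          = fun j : ℕ => (2 * a * (2:ℝ)⁻¹ ^ (K + 1)) * (2:ℝ)⁻¹ ^ j := by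
        funext j
        simp only [hl]
        rw [pow_add, pow_add]
        ring
      rw [this, tsum_mul_left, tsum_geometric_inv_two]
      rw [pow_succ]
      ring
    calc (∑ k ∈ Finset.range K, ENNReal.ofReal (2 * min h (l k)))
          + ∑' j : ℕ, ENNReal.ofReal (2 * min h (l (j + K)))
        ≤ ENNReal.ofReal (2 * h * K) + ENNReal.ofReal (2 * a * (2:ℝ)⁻¹ ^ (K:ℕ)) :=
          add_le_add hhead htail
      _ = ENNReal.ofReal (2 * h * K + 2 * a * (2:ℝ)⁻¹ ^ (K:ℕ)) := by
          rw [← ENNReal.ofReal_add (by positivity) (by positivity)]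
  have hkey := key_ineq a h ha hh hha
  have hL0 : (0:ℝ) ≤ Real.logb 2 (a/h) := by
    have hah : (1:ℝ) ≤ a / h := by
      rw [le_div_iff₀ hh]; linarith
    exact Real.logb_nonneg one_lt_two hah
  have hfinal : volume {x : AddCircle (1:ℝ) | ¬((x + h' ∈ E) ↔ (x ∈ E))}
      ≤ ENNReal.ofReal (2 * h * Real.logb 2 (a/h) + 2 * h) := by
    refine (hstep1.trans hstep2).trans (ENNReal.ofReal_le_ofReal ?_)
    exact hkey
  rw [tau, bad_set_eq E h']
  exact ENNReal.toReal_le_of_le_ofReal (by positivity) hfinal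

/-- If `0 < a ≤ 1` and `E ⊆ 𝕋` is the union of pairwise disjoint open
arcs of lengths `a·2^{-k}`, `k = 1, 2, …`, then `τ(h,E) ≤ 2h·log₂(a/h) + 2h` for every
`0 < h ≤ a/2`; in particular `τ(h,E) = O(h·log(1/h))` as `h → 0⁺`. -/
theorem stmt_14 (a : ℝ) (ha : 0 < a) (ha' : a ≤ 1) (c : ℕ → ℝ)
    (E : Set (AddCircle (1:ℝ)))
    (hE : E = ⋃ k : ℕ, arc (c k) (a * (2:ℝ)⁻¹ ^ (k + 1)))
    (hdisj : Pairwise (Function.onFun Disjoint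
      (fun k : ℕ => arc (c k) (a * (2:ℝ)⁻¹ ^ (k + 1))))) :
    (∀ h : ℝ, 0 < h → h ≤ a / 2 →
        tau h E ≤ 2 * h * Real.logb 2 (a / h) + 2 * h) ∧
    ∃ C > 0, ∃ δ > 0, ∀ h : ℝ, 0 < h → h ≤ δ →
        tau h E ≤ C * (h * Real.log (1 / h)) := by
  constructor
  · exact fun h hh hha => main_bound a ha ha' c E hE h hh hha
  · have hlog2 : (0:ℝ) < Real.log 2 := Real.log_pos one_lt_two
    refine ⟨2 / Real.log 2 + 2, by positivity, min (a/2) (Real.exp (-1)),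
      lt_min (by linarith) (Real.exp_pos _), fun h hh hδ => ?_⟩
    have hha : h ≤ a / 2 := hδ.trans (min_le_left _ _)
    have hhe : h ≤ Real.exp (-1) := hδ.trans (min_le_right _ _)
    have hlogh : Real.log h ≤ -1 := by
      calc Real.log h ≤ Real.log (Real.exp (-1)) := Real.log_le_log hh hhe
        _ = -1 := Real.log_exp _
    have hlog1h : (1:ℝ) ≤ Real.log (1/h) := by
      rw [one_div, Real.log_inv]; linarith
    have hbound := main_bound a ha ha' c E hE h hh hha
    have hlogb : Real.logb 2 (a/h) ≤ Real.log (1/h) / Real.log 2 := by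
      rw [Real.logb, Real.log_div (ne_of_gt ha) (ne_of_gt hh)]
      have hloga : Real.log a ≤ 0 := Real.log_nonpos ha.le ha'
      rw [one_div, Real.log_inv]
      gcongr
      linarith
    calc tau h E ≤ 2 * h * Real.logb 2 (a / h) + 2 * h := hbound
      _ ≤ 2 * h * (Real.log (1/h) / Real.log 2) + 2 * (h * Real.log (1/h)) := by
          have h1 : 2 * h * Real.logb 2 (a / h) ≤ 2 * h * (Real.log (1/h) / Real.log 2) := by
            apply mul_le_mul_of_nonneg_left hlogb (by positivity)
          have h2 : 2 * h ≤ 2 * (h * Real.log (1/h)) := by nlinarith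
          linarith
      _ = (2 / Real.log 2 + 2) * (h * Real.log (1 / h)) := by
          field_simp
end

section
/- Let 0 < λ < 1/3 and let E ⊆ 𝕋 be an open subset of the circle that is a union of pairwise disjoint open arcs such that for each integer j ≥ 1 exactly 2^{j−1} of the arcs have length λ^j (and there are no other arcs). (Such an E arises as the complement of a fat Cantor set of ratio λ.) Then there exists a constant C > 0 depending only on λ such that τ(h,E) ≤ C·h^{1 − log 2/ log(1/λ)} for all h with 0 < h ≤ λ. -/
open MeasureTheory Set

namespace Stmt15Aux

lemma coe_eq_coe (x y : ℝ) :
    ((x : AddCircle (1:ℝ)) = (y : AddCircle (1:ℝ))) ↔ ∃ n : ℤ, x = y + n := by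
  rw [QuotientAddGroup.eq_iff_sub_mem]
  constructor
  · intro h
    obtain ⟨n, hn⟩ := AddSubgroup.mem_zmultiples_iff.mp h
    rw [zsmul_eq_mul, mul_one] at hn
    exact ⟨n, by linarith⟩
  · rintro ⟨n, rfl⟩
    exact AddSubgroup.mem_zmultiples_iff.mpr ⟨n, by rw [zsmul_eq_mul, mul_one]; ring⟩

lemma singleton_null (x : AddCircle (1:ℝ)) : volume {x} = 0 := by
  obtain ⟨r, rfl⟩ := QuotientAddGroup.mk_surjective x
  rw [AddCircle.add_projection_respects_measure (1:ℝ) 0 (measurableSet_singleton _)]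
  refine measure_mono_null inter_subset_left ?_
  have hc : (QuotientAddGroup.mk ⁻¹' {((r:ℝ) : AddCircle (1:ℝ))} : Set ℝ)
      = range (fun n : ℤ => r + n) := by
    ext y
    simp only [mem_preimage, mem_singleton_iff, mem_range]
    rw [show (QuotientAddGroup.mk y : AddCircle (1:ℝ)) = (y : AddCircle (1:ℝ)) from rfl,
      coe_eq_coe]
    constructor
    · rintro ⟨n, rfl⟩; exact ⟨n, rfl⟩
    · rintro ⟨n, rfl⟩; exact ⟨n, rfl⟩
  rw [hc]
  exact (Set.countable_range _).measure_zero _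

lemma arc_open (a l : ℝ) : IsOpen (arc a l) :=
  QuotientAddGroup.isOpenMap_coe _ isOpen_Ioo

lemma arc_volume_le (a l : ℝ) (hl : l ≤ 1) : volume (arc a l) ≤ ENNReal.ofReal l := by
  rw [AddCircle.add_projection_respects_measure (1:ℝ) a (arc_open a l).measurableSet]
  have hsub : QuotientAddGroup.mk ⁻¹' arc a l ∩ Ioc a (a + 1) ⊆ Ioo a (a + l) := by
    rintro x ⟨hx1, hx2⟩
    obtain ⟨y, hy, hxy⟩ := hx1
    have hyx : ∃ n : ℤ, y = x + n := (coe_eq_coe y x).mp hxy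
    obtain ⟨n, hn⟩ := hyx
    have hn0 : (n : ℝ) = 0 := by
      have h1 : (n : ℝ) < 1 := by
        have := hy.2; have := hx2.1; linarith
      have h2 : (-1 : ℝ) < n := by
        have := hy.1; have := hx2.2; linarith
      have hn1 : n < 1 := by exact_mod_cast h1
      have hn2 : -1 < n := by exact_mod_cast h2
      have : n = 0 := by omega
      simp [this]
    have hyx : y = x := by rw [hn, hn0, add_zero]
    rw [← hyx]; exact hy
  calc volume (QuotientAddGroup.mk ⁻¹' arc a l ∩ Ioc a (a + 1)) ≤ volume (Ioo a (a + l)) :=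
        measure_mono hsub
    _ = ENNReal.ofReal l := by rw [Real.volume_Ioo]; ring_nf

lemma arc_preimage (a l h : ℝ) :
    (fun x : AddCircle (1:ℝ) => x + ((h:ℝ):AddCircle (1:ℝ))) ⁻¹' arc a l = arc (a - h) l := by
  ext x
  simp only [arc, mem_preimage, mem_image]
  constructor
  · rintro ⟨r, hr, hrx⟩
    refine ⟨r - h, ⟨by linarith [hr.1], by linarith [hr.2]⟩, ?_⟩
    have : ((r - h : ℝ) : AddCircle (1:ℝ)) = (r : AddCircle (1:ℝ)) - (h : AddCircle (1:ℝ)) :=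
      QuotientAddGroup.mk_sub _ r h
    rw [this, hrx]; abel
  · rintro ⟨r, hr, hrx⟩
    refine ⟨r + h, ⟨by linarith [hr.1], by linarith [hr.2]⟩, ?_⟩
    have : ((r + h : ℝ) : AddCircle (1:ℝ)) = (r : AddCircle (1:ℝ)) + (h : AddCircle (1:ℝ)) :=
      QuotientAddGroup.mk_add _ r h
    rw [this, hrx]

lemma image_Ioc_bound (b m : ℝ) (hm : m ≤ 1) :
    volume ((fun r : ℝ => (r : AddCircle (1:ℝ))) '' Ioc b (b + m)) ≤ ENNReal.ofReal m := by
  have hsub : Ioc b (b + m) ⊆ Ioo b (b + m) ∪ {b + m} := by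
    rintro x ⟨h1, h2⟩
    rcases eq_or_lt_of_le h2 with h | h
    · exact Or.inr (by simp [h])
    · exact Or.inl ⟨h1, h⟩
  calc volume ((fun r : ℝ => (r : AddCircle (1:ℝ))) '' Ioc b (b + m))
      ≤ volume ((fun r : ℝ => (r : AddCircle (1:ℝ))) '' (Ioo b (b + m) ∪ {b + m})) :=
        measure_mono (image_mono hsub)
    _ = volume (arc b m ∪ {((b + m : ℝ) : AddCircle (1:ℝ))}) := by
        rw [image_union, image_singleton]; rfl
    _ ≤ volume (arc b m) + volume {((b + m : ℝ) : AddCircle (1:ℝ))} := measure_union_le _ _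
    _ ≤ ENNReal.ofReal m + 0 := add_le_add (arc_volume_le b m hm) (le_of_eq (singleton_null _))
    _ = ENNReal.ofReal m := add_zero _

lemma image_Ico_bound (b m : ℝ) (hm : m ≤ 1) :
    volume ((fun r : ℝ => (r : AddCircle (1:ℝ))) '' Ico b (b + m)) ≤ ENNReal.ofReal m := by
  have hsub : Ico b (b + m) ⊆ Ioo b (b + m) ∪ {b} := by
    rintro x ⟨h1, h2⟩
    rcases eq_or_lt_of_le h1 with h | h
    · exact Or.inr (by simp [h.symm])
    · exact Or.inl ⟨h, h2⟩
  calc volume ((fun r : ℝ => (r : AddCircle (1:ℝ))) '' Ico b (b + m))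
      ≤ volume ((fun r : ℝ => (r : AddCircle (1:ℝ))) '' (Ioo b (b + m) ∪ {b})) :=
        measure_mono (image_mono hsub)
    _ = volume (arc b m ∪ {((b : ℝ) : AddCircle (1:ℝ))}) := by
        rw [image_union, image_singleton]; rfl
    _ ≤ volume (arc b m) + volume {((b : ℝ) : AddCircle (1:ℝ))} := measure_union_le _ _
    _ ≤ ENNReal.ofReal m + 0 := add_le_add (arc_volume_le b m hm) (le_of_eq (singleton_null _))
    _ = ENNReal.ofReal m := add_zero _

lemma symm_bound (a l h : ℝ) (hh : 0 < h) (hl : 0 < l) (hl1 : l ≤ 1) :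
    volume (symmDiff (arc (a - h) l) (arc a l)) ≤ ENNReal.ofReal (2 * min l h) := by
  set m := min l h with hm
  have hm1 : m ≤ 1 := le_trans (min_le_left _ _) hl1
  have h1 : Ioo (a - h) (a - h + l) \ Ioo a (a + l) ⊆ Ioc (a - h) ((a - h) + m) := by
    rintro x ⟨hx, hnx⟩
    have hxa : x ≤ a := by
      by_contra hc
      push_neg at hc
      exact hnx ⟨hc, by linarith [hx.2]⟩
    refine ⟨hx.1, ?_⟩
    rcases le_total l h with hlh | hlh
    · rw [hm, min_eq_left hlh]; linarith [hx.2]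
    · rw [hm, min_eq_right hlh]; linarith
  have h2 : Ioo a (a + l) \ Ioo (a - h) (a - h + l) ⊆ Ico ((a + l - m)) ((a + l - m) + m) := by
    rintro x ⟨hx, hnx⟩
    have hxa : a - h + l ≤ x := by
      by_contra hc
      push_neg at hc
      exact hnx ⟨by linarith [hx.1], hc⟩
    constructor
    · rcases le_total l h with hlh | hlh
      · rw [hm, min_eq_left hlh]; linarith [hx.1]
      · rw [hm, min_eq_right hlh]; linarith
    · linarith [hx.2]
  calc volume (symmDiff (arc (a - h) l) (arc a l))
      ≤ volume ((arc (a - h) l) \ (arc a l)) + volume ((arc a l) \ (arc (a - h) l)) := by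
        rw [Set.symmDiff_def]; exact measure_union_le _ _
    _ ≤ ENNReal.ofReal m + ENNReal.ofReal m := by
        refine add_le_add ?_ ?_
        · calc volume ((arc (a - h) l) \ (arc a l))
              ≤ volume ((fun r : ℝ => (r : AddCircle (1:ℝ))) ''
                  (Ioo (a - h) (a - h + l) \ Ioo a (a + l))) :=
                measure_mono (Set.subset_image_diff _ _ _)
            _ ≤ volume ((fun r : ℝ => (r : AddCircle (1:ℝ))) '' Ioc (a - h) ((a - h) + m)) :=
                measure_mono (image_mono h1)
            _ ≤ ENNReal.ofReal m := image_Ioc_bound _ _ hm1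
        · calc volume ((arc a l) \ (arc (a - h) l))
              ≤ volume ((fun r : ℝ => (r : AddCircle (1:ℝ))) ''
                  (Ioo a (a + l) \ Ioo (a - h) (a - h + l))) :=
                measure_mono (Set.subset_image_diff _ _ _)
            _ ≤ volume ((fun r : ℝ => (r : AddCircle (1:ℝ))) ''
                  Ico ((a + l - m)) ((a + l - m) + m)) :=
                measure_mono (image_mono h2)
            _ ≤ ENNReal.ofReal m := image_Ico_bound _ _ hm1
    _ = ENNReal.ofReal (2 * m) := by
        rw [← ENNReal.ofReal_add (le_of_lt (lt_min hl hh)) (le_of_lt (lt_min hl hh))]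
        ring_nf
        rw [hm]

lemma symmDiff_iUnion_subset {ι : Sort*} {X : Type*} (s t : ι → Set X) :
    symmDiff (⋃ i, s i) (⋃ i, t i) ⊆ ⋃ i, symmDiff (s i) (t i) := by
  intro x hx
  rw [Set.mem_symmDiff] at hx
  rcases hx with ⟨hs, ht⟩ | ⟨ht, hs⟩
  · obtain ⟨i, hi⟩ := mem_iUnion.mp hs
    exact mem_iUnion.mpr ⟨i, Set.mem_symmDiff.mpr (Or.inl ⟨hi, fun h => ht (mem_iUnion.mpr ⟨i, h⟩)⟩)⟩
  · obtain ⟨i, hi⟩ := mem_iUnion.mp ht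
    exact mem_iUnion.mpr ⟨i, Set.mem_symmDiff.mpr (Or.inr ⟨hi, fun h => hs (mem_iUnion.mpr ⟨i, h⟩)⟩)⟩

lemma analytic_core (lam h : ℝ) (J : ℕ) (hlam : 0 < lam) (hlam' : lam < 1/3) (h0 : 0 < h)
    (hJ1 : h ≤ lam ^ J) (hJ2 : lam ^ (J + 1) ≤ h) :
    ∑' j : ℕ, (2:ℝ)^j * (2 * min (lam ^ (j+1)) h)
      ≤ (2 + 2 / (1 - 2*lam)) * h ^ (1 - Real.log 2 / Real.log (1 / lam)) := by
  have h2l : 0 < 1 - 2*lam := by linarith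
  have hh1 : h ≤ 1 := le_trans hJ1 (pow_le_one₀ (le_of_lt hlam) (by linarith))
  have hu_nonneg : ∀ j : ℕ, 0 ≤ (2:ℝ)^j * (2 * min (lam ^ (j+1)) h) := fun j => by
    positivity
  have hv_summ : Summable (fun j : ℕ => (2:ℝ)^j * (2 * lam ^ (j+1))) := by
    have : Summable (fun j : ℕ => (2*lam) * (2*lam)^j) :=
      (summable_geometric_of_lt_one (by positivity) (by linarith)).mul_left _
    refine this.congr fun j => by ring
  have hu_le : ∀ j : ℕ, (2:ℝ)^j * (2 * min (lam ^ (j+1)) h) ≤ (2:ℝ)^j * (2 * lam ^ (j+1)) :=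
    fun j => by
      have : min (lam ^ (j+1)) h ≤ lam ^ (j+1) := min_le_left _ _
      have h2 : (0:ℝ) ≤ (2:ℝ)^j := by positivity
      nlinarith
  have hu_summ : Summable (fun j : ℕ => (2:ℝ)^j * (2 * min (lam ^ (j+1)) h)) :=
    Summable.of_nonneg_of_le hu_nonneg hu_le hv_summ
  rw [← hu_summ.sum_add_tsum_nat_add J]
  have hS1 : ∑ j ∈ Finset.range J, (2:ℝ)^j * (2 * min (lam ^ (j+1)) h) ≤ 2^J * (2*h) := by
    calc ∑ j ∈ Finset.range J, (2:ℝ)^j * (2 * min (lam ^ (j+1)) h)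
        ≤ ∑ j ∈ Finset.range J, (2:ℝ)^j * (2*h) := by
          refine Finset.sum_le_sum fun j _ => ?_
          have : min (lam ^ (j+1)) h ≤ h := min_le_right _ _
          have h2 : (0:ℝ) ≤ (2:ℝ)^j := by positivity
          nlinarith
      _ = (∑ j ∈ Finset.range J, (2:ℝ)^j) * (2*h) := by rw [Finset.sum_mul]
      _ ≤ 2^J * (2*h) := by
          have := geom_sum_eq (by norm_num : (2:ℝ) ≠ 1) J
          have h2 : ∑ j ∈ Finset.range J, (2:ℝ)^j = 2^J - 1 := by
            rw [this]; norm_num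
          rw [h2]; nlinarith
  have hS2 : ∑' j : ℕ, (2:ℝ)^(j+J) * (2 * min (lam ^ (j+J+1)) h)
      ≤ 2^J * (2*h) / (1 - 2*lam) := by
    have hle : ∀ j : ℕ, (2:ℝ)^(j+J) * (2 * min (lam ^ (j+J+1)) h)
        ≤ ((2:ℝ)^J * (2 * lam^(J+1))) * (2*lam)^j := by
      intro j
      have hmin : min (lam ^ (j+J+1)) h ≤ lam ^ (j+J+1) := min_le_left _ _
      have hexp : (2:ℝ)^(j+J) * (2 * lam ^ (j+J+1))
          = ((2:ℝ)^J * (2 * lam^(J+1))) * (2*lam)^j := by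
        rw [pow_add, mul_pow, pow_add, pow_add]; ring
      have h2 : (0:ℝ) ≤ (2:ℝ)^(j+J) := by positivity
      nlinarith [hexp]
    have hsumm2 : Summable (fun j : ℕ => ((2:ℝ)^J * (2 * lam^(J+1))) * (2*lam)^j) :=
      (summable_geometric_of_lt_one (by positivity) (by linarith)).mul_left _
    calc ∑' j : ℕ, (2:ℝ)^(j+J) * (2 * min (lam ^ (j+J+1)) h)
        ≤ ∑' j : ℕ, ((2:ℝ)^J * (2 * lam^(J+1))) * (2*lam)^j :=
          ((summable_nat_add_iff J).2 hu_summ).tsum_le_tsum hle hsumm2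
      _ = ((2:ℝ)^J * (2 * lam^(J+1))) * (1 - 2*lam)⁻¹ := by
          rw [tsum_mul_left, tsum_geometric_of_lt_one (by positivity) (by linarith)]
      _ ≤ 2^J * (2*h) / (1 - 2*lam) := by
          rw [div_eq_mul_inv]
          have hp : (0:ℝ) ≤ (1 - 2*lam)⁻¹ := by positivity
          have h2 : (0:ℝ) ≤ (2:ℝ)^J := by positivity
          gcongr
  have h2J : (2:ℝ)^J * h ≤ h ^ (1 - Real.log 2 / Real.log (1 / lam)) := by
    have hloglam : 0 < Real.log (1 / lam) := Real.log_pos (by rw [lt_div_iff₀ hlam]; linarith)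
    have hlogh : 0 ≤ Real.log (1 / h) := Real.log_nonneg (by rw [le_div_iff₀ h0]; linarith)
    set α := Real.log 2 / Real.log (1 / lam) with hα
    have hkey : (J : ℝ) * Real.log (1 / lam) ≤ Real.log (1 / h) := by
      have : Real.log h ≤ (J : ℝ) * Real.log lam := by
        calc Real.log h ≤ Real.log (lam ^ J) := Real.log_le_log h0 hJ1
          _ = (J : ℝ) * Real.log lam := by rw [Real.log_pow]
      rw [Real.log_div one_ne_zero (ne_of_gt hlam), Real.log_div one_ne_zero (ne_of_gt h0),
        Real.log_one]
      linarith
    have h2Ja : (2:ℝ)^J ≤ h ^ (-α) := by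
      rw [← Real.exp_log (show (0:ℝ) < (2:ℝ)^J by positivity),
          Real.rpow_def_of_pos h0]
      apply Real.exp_le_exp.mpr
      rw [Real.log_pow]
      have hlh : Real.log h = - Real.log (1/h) := by
        rw [Real.log_div one_ne_zero (ne_of_gt h0), Real.log_one]; ring
      rw [hlh]
      have hα' : -Real.log (1/h) * -α = Real.log 2 * (Real.log (1/h) / Real.log (1/lam)) := by
        rw [hα]; field_simp
      rw [hα']
      have hJle : (J : ℝ) ≤ Real.log (1/h) / Real.log (1/lam) := by
        rw [le_div_iff₀ hloglam]; linarith
      have hlog2 : 0 ≤ Real.log 2 := Real.log_nonneg (by norm_num)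
      calc (J : ℝ) * Real.log 2 ≤ (Real.log (1/h) / Real.log (1/lam)) * Real.log 2 :=
            mul_le_mul_of_nonneg_right hJle hlog2
        _ = Real.log 2 * (Real.log (1/h) / Real.log (1/lam)) := by ring
    calc (2:ℝ)^J * h ≤ h ^ (-α) * h := mul_le_mul_of_nonneg_right h2Ja (le_of_lt h0)
      _ = h ^ (1 - α) := by
          rw [show (1 - α) = -α + 1 by ring, Real.rpow_add h0, Real.rpow_one]
  calc _ ≤ (2:ℝ)^J * (2*h) + 2^J * (2*h) / (1 - 2*lam) := add_le_add hS1 hS2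
    _ = (2 + 2 / (1 - 2*lam)) * ((2:ℝ)^J * h) := by field_simp
    _ ≤ (2 + 2 / (1 - 2*lam)) * h ^ (1 - Real.log 2 / Real.log (1 / lam)) := by
        have hC : (0:ℝ) ≤ 2 + 2 / (1 - 2*lam) := by positivity
        exact mul_le_mul_of_nonneg_left h2J hC

end Stmt15Aux

open Stmt15Aux in
/-- Let `0 < λ < 1/3` and let `E ⊆ 𝕋` be a union of pairwise disjoint
open arcs such that for each `j ≥ 1` exactly `2^{j-1}` arcs have length `λ^j` (indexed here
by `⟨j, i⟩ : Σ j : ℕ, Fin (2^j)` with length `λ^{j+1}`). Then there is `C > 0`, depending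
only on `λ`, with `τ(h,E) ≤ C·h^{1 - log 2 / log(1/λ)}` for all `0 < h ≤ λ`. -/
theorem stmt_15 (lam : ℝ) (hlam : 0 < lam) (hlam' : lam < 1/3)
    (c : (Σ j : ℕ, Fin (2 ^ j)) → ℝ) (E : Set (AddCircle (1:ℝ)))
    (hE : E = ⋃ i : (Σ j : ℕ, Fin (2 ^ j)), arc (c i) (lam ^ (i.1 + 1)))
    (hdisj : Pairwise (Function.onFun Disjoint
      (fun i : (Σ j : ℕ, Fin (2 ^ j)) => arc (c i) (lam ^ (i.1 + 1))))) :
    ∃ C > 0, ∀ h : ℝ, 0 < h → h ≤ lam →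
      tau h E ≤ C * h ^ (1 - Real.log 2 / Real.log (1 / lam)) := by
  have h2l : 0 < 1 - 2*lam := by linarith
  refine ⟨2 + 2 / (1 - 2*lam), by positivity, fun h h0 hhl => ?_⟩
  -- the exceptional set
  set D : Set (AddCircle (1:ℝ)) := {x : AddCircle (1:ℝ) |
    E.indicator (fun _ => (1:ℝ)) (x + ((h : ℝ) : AddCircle (1:ℝ)))
      ≠ E.indicator (fun _ => (1:ℝ)) x} with hD
  have hDsymm : D = symmDiff ((fun x : AddCircle (1:ℝ) =>
      x + ((h:ℝ):AddCircle (1:ℝ))) ⁻¹' E) E := by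
    ext x
    by_cases h1 : x + ((h:ℝ):AddCircle (1:ℝ)) ∈ E <;> by_cases h2 : x ∈ E <;>
      simp [hD, Set.mem_symmDiff, Set.indicator_apply, h1, h2]
  -- bound volume of D
  have key : volume D ≤ ENNReal.ofReal (∑' j : ℕ, (2:ℝ)^j * (2 * min (lam ^ (j+1)) h)) := by
    have hsub : D ⊆ ⋃ i : (Σ j : ℕ, Fin (2 ^ j)),
        symmDiff (arc (c i - h) (lam ^ (i.1 + 1))) (arc (c i) (lam ^ (i.1 + 1))) := by
      rw [hDsymm, hE]
      have := symmDiff_iUnion_subset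
        (fun i : (Σ j : ℕ, Fin (2 ^ j)) =>
          (fun x : AddCircle (1:ℝ) => x + ((h:ℝ):AddCircle (1:ℝ))) ⁻¹' arc (c i) (lam ^ (i.1 + 1)))
        (fun i : (Σ j : ℕ, Fin (2 ^ j)) => arc (c i) (lam ^ (i.1 + 1)))
      rw [preimage_iUnion]
      refine subset_trans this ?_
      refine iUnion_mono fun i => ?_
      rw [arc_preimage]
    have hsingle : ∀ i : (Σ j : ℕ, Fin (2 ^ j)),
        volume (symmDiff (arc (c i - h) (lam ^ (i.1 + 1))) (arc (c i) (lam ^ (i.1 + 1))))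
          ≤ ENNReal.ofReal (2 * min (lam ^ (i.1 + 1)) h) := fun i =>
      symm_bound (c i) (lam ^ (i.1 + 1)) h h0 (by positivity)
        (pow_le_one₀ (le_of_lt hlam) (by linarith))
    calc volume D ≤ ∑' i : (Σ j : ℕ, Fin (2 ^ j)),
          volume (symmDiff (arc (c i - h) (lam ^ (i.1 + 1))) (arc (c i) (lam ^ (i.1 + 1)))) :=
          le_trans (measure_mono hsub) (measure_iUnion_le _)
      _ ≤ ∑' i : (Σ j : ℕ, Fin (2 ^ j)), ENNReal.ofReal (2 * min (lam ^ (i.1 + 1)) h) :=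
          ENNReal.tsum_le_tsum hsingle
      _ = ∑' j : ℕ, ∑' b : Fin (2 ^ j), ENNReal.ofReal (2 * min (lam ^ (j + 1)) h) :=
          ENNReal.tsum_sigma' _
      _ = ∑' j : ℕ, ENNReal.ofReal ((2:ℝ)^j * (2 * min (lam ^ (j+1)) h)) := by
          refine tsum_congr fun j => ?_
          rw [tsum_fintype]
          rw [Finset.sum_const, Finset.card_univ, Fintype.card_fin, nsmul_eq_mul]
          rw [← ENNReal.ofReal_natCast (2^j), ← ENNReal.ofReal_mul (by positivity)]
          congr 1
          push_cast
          ring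
      _ = ENNReal.ofReal (∑' j : ℕ, (2:ℝ)^j * (2 * min (lam ^ (j+1)) h)) := by
          refine (ENNReal.ofReal_tsum_of_nonneg (fun j => by positivity) ?_).symm
          have hv_summ : Summable (fun j : ℕ => (2:ℝ)^j * (2 * lam ^ (j+1))) := by
            have : Summable (fun j : ℕ => (2*lam) * (2*lam)^j) :=
              (summable_geometric_of_lt_one (by positivity) (by linarith)).mul_left _
            refine this.congr fun j => by ring
          refine Summable.of_nonneg_of_le (fun j => by positivity) (fun j => ?_) hv_summ
          have : min (lam ^ (j+1)) h ≤ lam ^ (j+1) := min_le_left _ _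
          have h2 : (0:ℝ) ≤ (2:ℝ)^j := by positivity
          nlinarith
  -- choose J with lam^(J+1) < h ≤ lam^J
  obtain ⟨J, hJ1, hJ2⟩ : ∃ J : ℕ, h ≤ lam ^ J ∧ lam ^ (J + 1) < h := by
    obtain ⟨n, hn⟩ := exists_pow_lt_of_lt_one h0 (by linarith : lam < 1)
    have h1 : ¬ (lam ^ 0 < h) := by simp; linarith
    classical
    have hne : ∃ n, lam ^ n < h := ⟨n, hn⟩
    have hN : lam ^ (Nat.find hne) < h := Nat.find_spec hne
    have hN1 : 1 ≤ Nat.find hne := by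
      rcases Nat.eq_zero_or_pos (Nat.find hne) with h' | h'
      · exact absurd (h' ▸ hN) h1
      · exact h'
    refine ⟨Nat.find hne - 1, ?_, ?_⟩
    · have := Nat.find_min hne (m := Nat.find hne - 1) (by omega)
      push_neg at this; exact this
    · rwa [Nat.sub_add_cancel hN1]
  have hana := analytic_core lam h J hlam hlam' h0 hJ1 (le_of_lt hJ2)
  -- conclude
  have hrpow : (0:ℝ) ≤ (2 + 2 / (1 - 2*lam)) * h ^ (1 - Real.log 2 / Real.log (1 / lam)) := by
    have := Real.rpow_nonneg (le_of_lt h0) (1 - Real.log 2 / Real.log (1 / lam))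
    positivity
  refine ENNReal.toReal_le_of_le_ofReal hrpow ?_
  exact le_trans key (ENNReal.ofReal_le_ofReal hana)
end

section
/- Let E ⊆ ℝ^d be a nonempty bounded open set with complement K = ℝ^d \ E, and set K(h) = {x : dist(x,K) ≤ h}. Suppose the limit lim_{h→0+} ln|K(h) \ K| / ln h exists and equals d − d_X for some real number d_X. Then for every ε > 0 there exists δ > 0 such that for every unit vector v ∈ ℝ^d and every h with 0 < h < δ, τ(h,v,E) ≤ h^{d − d_X − ε}; consequently ω(χ_E, t)_1 := sup over unit vectors v and 0 < h ≤ t of ∫_{ℝ^d} |χ_E(x + hv) − χ_E(x)| dx satisfies ω(χ_E, t)_1 = O(t^{d − d_X − ε}) for every ε > 0. -/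
open MeasureTheory Set

/-- `τ(h,v,E)` in `ℝ^d`: the measure of the set where the characteristic function of `E`
translated by `h·v` differs from itself. -/
noncomputable def tauRd (d : ℕ) (E : Set (EuclideanSpace ℝ (Fin d)))
    (v : EuclideanSpace ℝ (Fin d)) (h : ℝ) : ℝ :=
  (volume {x : EuclideanSpace ℝ (Fin d) |
    E.indicator (fun _ => (1:ℝ)) (x + h • v) ≠ E.indicator (fun _ => (1:ℝ)) x}).toReal

open Filter in
/-- Let `E ⊆ ℝ^d` be nonempty bounded open with `K = Eᶜ`,
`K(h) = {x : dist(x,K) ≤ h}`, and suppose `lim_{h→0⁺} ln|K(h)\K| / ln h = d - d_X`. Then for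
every `ε > 0` there is `δ > 0` such that `τ(h,v,E) ≤ h^{d-d_X-ε}` for every unit vector `v`
and `0 < h < δ`; consequently `ω(χ_E,t)_1 = sup_{‖v‖=1, 0<h≤t} ∫ |χ_E(x+hv) - χ_E(x)| dx`
satisfies `ω(χ_E,t)_1 = O(t^{d-d_X-ε})`. -/
theorem stmt_18 (d : ℕ) (E : Set (EuclideanSpace ℝ (Fin d))) (hne : E.Nonempty)
    (hEo : IsOpen E) (hEb : Bornology.IsBounded E) (dX : ℝ)
    (hlim : Tendsto (fun h : ℝ =>
        Real.log ((volume ({x : EuclideanSpace ℝ (Fin d) | Metric.infDist x Eᶜ ≤ h} \ Eᶜ)).toReal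
          ) / Real.log h)
      (nhdsWithin 0 (Set.Ioi 0)) (nhds ((d : ℝ) - dX))) :
    ∀ ε > (0:ℝ),
      (∃ δ > 0, ∀ v : EuclideanSpace ℝ (Fin d), ‖v‖ = 1 →
        ∀ h : ℝ, 0 < h → h < δ → tauRd d E v h ≤ h ^ ((d : ℝ) - dX - ε)) ∧
      (∃ C > 0, ∃ t₀ > 0, ∀ t : ℝ, 0 < t → t ≤ t₀ →
        (⨆ q : {q : EuclideanSpace ℝ (Fin d) × ℝ // ‖q.1‖ = 1 ∧ 0 < q.2 ∧ q.2 ≤ t},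
          ∫ x : EuclideanSpace ℝ (Fin d),
            |E.indicator (fun _ => (1:ℝ)) (x + q.1.2 • q.1.1)
              - E.indicator (fun _ => (1:ℝ)) x|)
          ≤ C * t ^ ((d : ℝ) - dX - ε)) := by
  classical
  intro ε hε
  set α : ℝ := (d : ℝ) - dX - ε with hαdef
  set S : ℝ → Set (EuclideanSpace ℝ (Fin d)) :=
    fun h => {x | Metric.infDist x Eᶜ ≤ h} \ Eᶜ with hSdef
  set M : ℝ → ℝ := fun h => (volume (S h)).toReal with hMdef
  have hEfin : volume E < ⊤ := hEb.measure_lt_top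
  have hSE : ∀ h : ℝ, S h ⊆ E := fun h x hx => not_not.mp hx.2
  have hSfin : ∀ h : ℝ, volume (S h) ≠ ⊤ :=
    fun h => ((measure_mono (hSE h)).trans_lt hEfin).ne
  have hMnonneg : ∀ h : ℝ, 0 ≤ M h := fun h => ENNReal.toReal_nonneg
  have hMmono : ∀ h t : ℝ, h ≤ t → M h ≤ M t := by
    intro h t hht
    exact ENNReal.toReal_mono (hSfin t)
      (measure_mono (fun x hx => ⟨le_trans hx.1 hht, hx.2⟩))
  -- core geometric bound
  have key : ∀ v : EuclideanSpace ℝ (Fin d), ‖v‖ = 1 → ∀ h : ℝ, 0 < h →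
      tauRd d E v h ≤ 2 * M h := by
    intro v hv h h0
    have hsub : {x : EuclideanSpace ℝ (Fin d) |
        E.indicator (fun _ => (1:ℝ)) (x + h • v) ≠ E.indicator (fun _ => (1:ℝ)) x}
        ⊆ S h ∪ (fun x => x + h • v) ⁻¹' (S h) := by
      intro x hx
      simp only [mem_setOf_eq] at hx
      have hnorm : ‖h • v‖ = h := by
        rw [norm_smul, hv]; simp [abs_of_pos h0]
      by_cases hxE : x ∈ E
      · by_cases hyE : x + h • v ∈ E
        · exact absurd (by simp [indicator_of_mem, hxE, hyE]) hx
        · left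
          refine ⟨?_, fun hc => hc hxE⟩
          have : Metric.infDist x Eᶜ ≤ dist x (x + h • v) :=
            Metric.infDist_le_dist_of_mem hyE
          simpa [dist_eq_norm, hnorm] using this
      · by_cases hyE : x + h • v ∈ E
        · right
          refine ⟨?_, fun hc => hc hyE⟩
          have : Metric.infDist (x + h • v) Eᶜ ≤ dist (x + h • v) x :=
            Metric.infDist_le_dist_of_mem hxE
          simpa [dist_eq_norm, hnorm] using this
        · exact absurd (by simp [indicator_of_notMem, hxE, hyE]) hx
    have htrans : volume ((fun x => x + h • v) ⁻¹' (S h)) = volume (S h) :=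
      measure_preimage_add_right volume (h • v) (S h)
    have hvol : volume {x : EuclideanSpace ℝ (Fin d) |
        E.indicator (fun _ => (1:ℝ)) (x + h • v) ≠ E.indicator (fun _ => (1:ℝ)) x}
        ≤ 2 * volume (S h) := by
      calc volume _ ≤ volume (S h ∪ (fun x => x + h • v) ⁻¹' (S h)) := measure_mono hsub
        _ ≤ volume (S h) + volume ((fun x => x + h • v) ⁻¹' (S h)) := measure_union_le _ _
        _ = 2 * volume (S h) := by rw [htrans, two_mul]
    have h2fin : (2 : ENNReal) * volume (S h) ≠ ⊤ :=
      ENNReal.mul_ne_top (by norm_num) (hSfin h)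
    calc tauRd d E v h ≤ ((2 : ENNReal) * volume (S h)).toReal :=
          ENNReal.toReal_mono h2fin hvol
      _ = 2 * M h := by rw [ENNReal.toReal_mul]; norm_num; rfl
  -- the limit hypothesis, rephrased
  have hlim' : Tendsto (fun h : ℝ => Real.log (M h) / Real.log h)
      (nhdsWithin 0 (Set.Ioi 0)) (nhds ((d : ℝ) - dX)) := hlim
  -- eventual bound  2 * M h ≤ h ^ α
  have hβ : (d : ℝ) - dX - ε / 2 < (d : ℝ) - dX := by linarith
  have E1 : ∀ᶠ h in nhdsWithin (0:ℝ) (Set.Ioi 0),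
      (d : ℝ) - dX - ε / 2 < Real.log (M h) / Real.log h :=
    hlim'.eventually (eventually_gt_nhds hβ)
  have E2 : ∀ᶠ h in nhdsWithin (0:ℝ) (Set.Ioi 0), h < 1 :=
    (eventually_lt_nhds one_pos).filter_mono nhdsWithin_le_nhds
  have E3 : ∀ᶠ h in nhdsWithin (0:ℝ) (Set.Ioi 0), h ^ (ε / 2) < 1 / 2 := by
    have hcont : Tendsto (fun h : ℝ => h ^ (ε / 2)) (nhds 0) (nhds (0:ℝ)) := by
      have := (Real.continuousAt_rpow_const 0 (ε / 2) (Or.inr (by positivity))).tendsto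
      simpa [Real.zero_rpow (by positivity : (0:ℝ) < ε / 2).ne'] using this
    exact (hcont.eventually (eventually_lt_nhds (by norm_num : (0:ℝ) < 1 / 2))).filter_mono
      nhdsWithin_le_nhds
  have E0 : ∀ᶠ h in nhdsWithin (0:ℝ) (Set.Ioi 0), h ∈ Set.Ioi (0:ℝ) :=
    eventually_mem_nhdsWithin
  have hev : ∀ᶠ h in nhdsWithin (0:ℝ) (Set.Ioi 0), 2 * M h ≤ h ^ α := by
    filter_upwards [E0, E1, E2, E3] with h h0 h1 h2 h3
    have h0 : (0:ℝ) < h := h0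
    have hlogneg : Real.log h < 0 := Real.log_neg h0 h2
    have hMle : M h ≤ h ^ ((d : ℝ) - dX - ε / 2) := by
      rcases eq_or_lt_of_le (hMnonneg h) with h' | h'
      · rw [← h']; positivity
      · have hlt : Real.log (M h) < ((d : ℝ) - dX - ε / 2) * Real.log h :=
          (lt_div_iff_of_neg hlogneg).mp h1
        calc M h = Real.exp (Real.log (M h)) := (Real.exp_log h').symm
          _ ≤ Real.exp (((d : ℝ) - dX - ε / 2) * Real.log h) := Real.exp_le_exp.mpr hlt.le
          _ = h ^ ((d : ℝ) - dX - ε / 2) := by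
              rw [Real.rpow_def_of_pos h0, mul_comm]
    have hsplit : h ^ ((d : ℝ) - dX - ε / 2) = h ^ α * h ^ (ε / 2) := by
      rw [← Real.rpow_add h0]
      congr 1
      rw [hαdef]; ring
    have hαpos : 0 < h ^ α := Real.rpow_pos_of_pos h0 _
    have hε2 : 0 ≤ h ^ (ε / 2) := Real.rpow_nonneg h0.le _
    calc 2 * M h ≤ 2 * (h ^ α * h ^ (ε / 2)) := by
          rw [← hsplit]; linarith
      _ = h ^ α * (2 * h ^ (ε / 2)) := by ring
      _ ≤ h ^ α * 1 := by nlinarith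
      _ = h ^ α := mul_one _
  obtain ⟨δ, hδpos, hδ⟩ := Metric.mem_nhdsWithin_iff.mp hev
  have hδ' : ∀ h : ℝ, 0 < h → h < δ → 2 * M h ≤ h ^ α := by
    intro h h0 hh
    exact hδ ⟨by simpa [Real.dist_eq, abs_of_pos h0] using hh, h0⟩
  constructor
  · refine ⟨δ, hδpos, ?_⟩
    intro v hv h h0 hh
    exact (key v hv h h0).trans (hδ' h h0 hh)
  · refine ⟨1, one_pos, δ / 2, by linarith, ?_⟩
    intro t ht0 htδ
    have htlt : t < δ := by linarith
    have htα : 0 ≤ t ^ α := Real.rpow_nonneg ht0.le _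
    refine Real.iSup_le ?_ (by simpa using htα)
    rintro ⟨⟨v, h⟩, hv, h0, hht⟩
    -- the integrand is the indicator of the difference set
    set D : Set (EuclideanSpace ℝ (Fin d)) := {x |
      E.indicator (fun _ => (1:ℝ)) (x + h • v) ≠ E.indicator (fun _ => (1:ℝ)) x} with hDdef
    have hf : Measurable (E.indicator (fun _ => (1:ℝ))) :=
      measurable_const.indicator hEo.measurableSet
    have hg : Measurable (fun x : EuclideanSpace ℝ (Fin d) =>
        E.indicator (fun _ => (1:ℝ)) (x + h • v)) := hf.comp (measurable_add_const _)
    have hD : MeasurableSet D := (measurableSet_eq_fun hg hf).compl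
    have hint : (fun x : EuclideanSpace ℝ (Fin d) =>
        |E.indicator (fun _ => (1:ℝ)) (x + h • v) - E.indicator (fun _ => (1:ℝ)) x|)
        = D.indicator (fun _ => (1:ℝ)) := by
      funext x
      rw [Set.indicator_apply]
      by_cases h1 : x + h • v ∈ E <;> by_cases h2 : x ∈ E <;>
        simp [hDdef, Set.indicator_apply, h1, h2]
    have hcalc : (∫ x : EuclideanSpace ℝ (Fin d),
        |E.indicator (fun _ => (1:ℝ)) (x + h • v) - E.indicator (fun _ => (1:ℝ)) x|)
        = tauRd d E v h := by
      rw [hint, integral_indicator_const (1:ℝ) hD]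
      simp [tauRd, hDdef]; rfl
    rw [hcalc, one_mul]
    calc tauRd d E v h ≤ 2 * M h := key v hv h h0
      _ ≤ 2 * M t := by linarith [hMmono h t hht]
      _ ≤ t ^ α := hδ' t ht0 htlt
end
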